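/- For positive integers a, c, d with convergence (e.g. a,d ≥ 2), ζ_{sl(4)}(a,0,1,0,0,d+1) = ζ(d+1, a, 1) + ∑_{i=1}^{a} ζ(d+1, a+1−i, i), where ζ(s₁,s₂,s₃) := ∑_{n₁ > n₂ > n₃ ≥ 1} n₁^{-s₁} n₂^{-s₂} n₃^{-s₃} is the triple Euler sum. -/

import Mathlib

noncomputable def wittenSl4 (a b c d e f : ℕ) : ℝ :=
  ∑' (n₁ : ℕ) (n₂ : ℕ) (n₃ : ℕ),
    1 / ((n₁ + 1 : ℝ) ^ a * (n₂ + 1 : ℝ) ^ b * (n₃ + 1 : ℝ) ^ c *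
      (n₁ + n₂ + 2 : ℝ) ^ d * (n₂ + n₃ + 2 : ℝ) ^ e * (n₁ + n₂ + n₃ + 3 : ℝ) ^ f)

/-- Triple Euler sum ζ(s₁,s₂,s₃) = ∑_{n₁>n₂>n₃≥1} n₁^{-s₁} n₂^{-s₂} n₃^{-s₃}. -/
noncomputable def tripleZeta (s₁ s₂ s₃ : ℕ) : ℝ :=
  ∑' (n : ℕ) (j : ℕ) (k : ℕ),
    1 / ((n + j + k + 3 : ℝ) ^ s₁ * (n + j + 2 : ℝ) ^ s₂ * (n + 1 : ℝ) ^ s₃)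

namespace WittenAux

open Finset

/-- tripleZeta summand on the product type. -/
noncomputable def G (s₁ s₂ s₃ : ℕ) (p : ℕ × ℕ × ℕ) : ℝ :=
  1 / (((p.1 : ℝ) + p.2.1 + p.2.2 + 3) ^ s₁ * ((p.1 : ℝ) + p.2.1 + 2) ^ s₂ *
    ((p.1 : ℝ) + 1) ^ s₃)

/-- witten summand (specialized) on the product type. -/
noncomputable def F (a d : ℕ) (p : ℕ × ℕ × ℕ) : ℝ :=
  1 / (((p.1 : ℝ) + 1) ^ a * ((p.2.2 : ℝ) + 1) * ((p.1 : ℝ) + p.2.1 + p.2.2 + 3) ^ (d + 1))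

lemma summable_one_div_sq : Summable (fun n : ℕ => 1 / ((n : ℝ) + 1) ^ 2) := by
  have h : Summable (fun n : ℕ => 1 / (n : ℝ) ^ 2) :=
    Real.summable_one_div_nat_pow.mpr one_lt_two
  have h' := (summable_nat_add_iff 1).mpr h
  refine h'.congr fun n => ?_
  push_cast
  ring

set_option maxHeartbeats 1000000 in
lemma summable_base : Summable (fun p : ℕ × ℕ × ℕ =>
    1 / ((p.1 : ℝ) + 1) ^ 2 * (1 / ((p.2.1 : ℝ) + 1) ^ 2 * (1 / ((p.2.2 : ℝ) + 1) ^ 2))) := by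
  have hnn : ∀ n : ℕ, 0 ≤ 1 / ((n : ℝ) + 1) ^ 2 := fun n => by positivity
  have h2 : Summable (fun q : ℕ × ℕ => 1 / ((q.1 : ℝ) + 1) ^ 2 * (1 / ((q.2 : ℝ) + 1) ^ 2)) :=
    summable_one_div_sq.mul_of_nonneg summable_one_div_sq hnn hnn
  exact summable_one_div_sq.mul_of_nonneg h2 hnn (fun q => by positivity)

lemma summable_of_le_base {f : ℕ × ℕ × ℕ → ℝ} (h0 : ∀ p, 0 ≤ f p)
    (h : ∀ p : ℕ × ℕ × ℕ,
      f p * (((p.1 : ℝ) + 1) ^ 2 * ((p.2.1 : ℝ) + 1) ^ 2 * ((p.2.2 : ℝ) + 1) ^ 2) ≤ 1) :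
    Summable f := by
  refine Summable.of_nonneg_of_le h0 (fun p => ?_) summable_base
  have h1 : (0:ℝ) < ((p.1 : ℝ) + 1) ^ 2 := by positivity
  have h2 : (0:ℝ) < ((p.2.1 : ℝ) + 1) ^ 2 := by positivity
  have h3 : (0:ℝ) < ((p.2.2 : ℝ) + 1) ^ 2 := by positivity
  rw [div_mul_div_comm, div_mul_div_comm, one_mul, one_mul, le_div_iff₀ (by positivity)]
  calc f p * (((p.1:ℝ) + 1) ^ 2 * (((p.2.1:ℝ) + 1) ^ 2 * ((p.2.2:ℝ) + 1) ^ 2))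
      = f p * (((p.1:ℝ) + 1) ^ 2 * ((p.2.1:ℝ) + 1) ^ 2 * ((p.2.2:ℝ) + 1) ^ 2) := by ring
    _ ≤ 1 := h p

lemma nat_cube_le {x y N : ℕ} (hx : x + 1 ≤ N) (hy : y + 1 ≤ N) :
    (x + 1) ^ 2 * (y + 1) ≤ N ^ 3 := by
  calc (x + 1) ^ 2 * (y + 1) ≤ N ^ 2 * N := Nat.mul_le_mul (Nat.pow_le_pow_left hx 2) hy
    _ = N ^ 3 := by ring

lemma cast_prod_le_of_nat_le {A B : ℕ} (h : A ≤ B) : (A : ℝ) ≤ (B : ℝ) := by exact_mod_cast h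

lemma mul_denom_le_one {c : ℝ} (hc : 0 < c) (h : ∀ x : ℝ, x = x) : True := trivial

lemma summable_G {s₁ s₂ s₃ : ℕ} (h1 : 3 ≤ s₁) (h2 : 1 ≤ s₂) (h3 : 1 ≤ s₃)
    (h23 : 3 ≤ s₂ + s₃) : Summable (G s₁ s₂ s₃) := by
  refine summable_of_le_base (fun p => by unfold G; positivity) (fun p => ?_)
  obtain ⟨n, j, k⟩ := p
  unfold G
  have key : (n + 1) ^ 2 * (j + 1) ^ 2 * (k + 1) ^ 2 ≤
      (n + j + k + 3) ^ s₁ * (n + j + 2) ^ s₂ * (n + 1) ^ s₃ := by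
    have hN3 : (n + j + k + 3) ^ 3 ≤ (n + j + k + 3) ^ s₁ :=
      Nat.pow_le_pow_right (by omega) h1
    rcases le_or_gt 2 s₂ with hc | hc
    · calc (n + 1) ^ 2 * (j + 1) ^ 2 * (k + 1) ^ 2
          = ((k + 1) ^ 2 * (n + 1)) * (j + 1) ^ 2 * (n + 1) := by ring
        _ ≤ (n + j + k + 3) ^ 3 * (n + j + 2) ^ s₂ * (n + 1) ^ s₃ := by
            refine Nat.mul_le_mul (Nat.mul_le_mul (nat_cube_le (by omega) (by omega)) ?_) ?_
            · calc (j + 1) ^ 2 ≤ (n + j + 2) ^ 2 := Nat.pow_le_pow_left (by omega) 2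
                _ ≤ (n + j + 2) ^ s₂ := Nat.pow_le_pow_right (by omega) hc
            · calc n + 1 = (n + 1) ^ 1 := (pow_one _).symm
                _ ≤ (n + 1) ^ s₃ := Nat.pow_le_pow_right (by omega) h3
        _ ≤ (n + j + k + 3) ^ s₁ * (n + j + 2) ^ s₂ * (n + 1) ^ s₃ :=
            Nat.mul_le_mul (Nat.mul_le_mul hN3 le_rfl) le_rfl
    · have hs3 : 2 ≤ s₃ := by omega
      calc (n + 1) ^ 2 * (j + 1) ^ 2 * (k + 1) ^ 2
          = ((k + 1) ^ 2 * (j + 1)) * (j + 1) * (n + 1) ^ 2 := by ring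
        _ ≤ (n + j + k + 3) ^ 3 * (n + j + 2) ^ s₂ * (n + 1) ^ s₃ := by
            refine Nat.mul_le_mul (Nat.mul_le_mul (nat_cube_le (by omega) (by omega)) ?_) ?_
            · calc j + 1 = (j + 1) ^ 1 := (pow_one _).symm
                _ ≤ (n + j + 2) ^ 1 := by rw [pow_one, pow_one]; omega
                _ ≤ (n + j + 2) ^ s₂ := Nat.pow_le_pow_right (by omega) h2
            · exact Nat.pow_le_pow_right (by omega) hs3
        _ ≤ (n + j + k + 3) ^ s₁ * (n + j + 2) ^ s₂ * (n + 1) ^ s₃ :=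
            Nat.mul_le_mul (Nat.mul_le_mul hN3 le_rfl) le_rfl
  have keyR : ((n:ℝ) + 1) ^ 2 * ((j:ℝ) + 1) ^ 2 * ((k:ℝ) + 1) ^ 2 ≤
      ((n:ℝ) + j + k + 3) ^ s₁ * ((n:ℝ) + j + 2) ^ s₂ * ((n:ℝ) + 1) ^ s₃ := by
    have := cast_prod_le_of_nat_le key
    push_cast at this
    convert this using 1 <;> ring
  have hpos : (0:ℝ) < ((n:ℝ) + j + k + 3) ^ s₁ * ((n:ℝ) + j + 2) ^ s₂ * ((n:ℝ) + 1) ^ s₃ := by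
    positivity
  rw [one_div, inv_mul_le_iff₀ hpos] -- goal: product ≤ _ * denom ?
  calc ((n:ℝ) + 1) ^ 2 * (((j:ℝ)) + 1) ^ 2 * (((k:ℝ)) + 1) ^ 2
      ≤ ((n:ℝ) + j + k + 3) ^ s₁ * ((n:ℝ) + j + 2) ^ s₂ * ((n:ℝ) + 1) ^ s₃ := keyR
    _ = ((n:ℝ) + j + k + 3) ^ s₁ * ((n:ℝ) + j + 2) ^ s₂ * ((n:ℝ) + 1) ^ s₃ * 1 := (mul_one _).symm

lemma summable_F {a d : ℕ} (ha : 2 ≤ a) (hd : 2 ≤ d) : Summable (F a d) := by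
  refine summable_of_le_base (fun p => by unfold F; positivity) (fun p => ?_)
  obtain ⟨n, j, k⟩ := p
  unfold F
  have key : (n + 1) ^ 2 * (j + 1) ^ 2 * (k + 1) ^ 2 ≤
      (n + 1) ^ a * (k + 1) * (n + j + k + 3) ^ (d + 1) := by
    calc (n + 1) ^ 2 * (j + 1) ^ 2 * (k + 1) ^ 2
        = (n + 1) ^ 2 * (k + 1) * ((j + 1) ^ 2 * (k + 1)) := by ring
      _ ≤ (n + 1) ^ a * (k + 1) * (n + j + k + 3) ^ (d + 1) := by
          refine Nat.mul_le_mul (Nat.mul_le_mul (Nat.pow_le_pow_right (by omega) ha) le_rfl) ?_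
          calc (j + 1) ^ 2 * (k + 1) ≤ (n + j + k + 3) ^ 3 :=
                nat_cube_le (by omega) (by omega)
            _ ≤ (n + j + k + 3) ^ (d + 1) := Nat.pow_le_pow_right (by omega) (by omega)
  have keyR : ((n:ℝ) + 1) ^ 2 * ((j:ℝ) + 1) ^ 2 * ((k:ℝ) + 1) ^ 2 ≤
      ((n:ℝ) + 1) ^ a * ((k:ℝ) + 1) * ((n:ℝ) + j + k + 3) ^ (d + 1) := by
    have := cast_prod_le_of_nat_le key
    push_cast at this
    convert this using 1 <;> ring
  have hpos : (0:ℝ) < ((n:ℝ) + 1) ^ a * ((k:ℝ) + 1) * ((n:ℝ) + j + k + 3) ^ (d + 1) := by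
    positivity
  rw [one_div, inv_mul_le_iff₀ hpos]
  calc ((n:ℝ) + 1) ^ 2 * (((j:ℝ)) + 1) ^ 2 * (((k:ℝ)) + 1) ^ 2
      ≤ ((n:ℝ) + 1) ^ a * ((k:ℝ) + 1) * ((n:ℝ) + j + k + 3) ^ (d + 1) := keyR
    _ = ((n:ℝ) + 1) ^ a * ((k:ℝ) + 1) * ((n:ℝ) + j + k + 3) ^ (d + 1) * 1 := (mul_one _).symm

/-- partial fractions -/
lemma partial_fractions (a : ℕ) {x z : ℝ} (hx : 0 < x) (hz : 0 < z) :
    1 / (x ^ a * z) =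
      (∑ i ∈ Finset.Icc 1 a, 1 / ((x + z) ^ (a + 1 - i) * x ^ i)) + 1 / ((x + z) ^ a * z) := by
  induction a with
  | zero => simp
  | succ a ih =>
    have hxz : 0 < x + z := by linarith
    have hsum : ∑ i ∈ Finset.Icc 1 (a + 1), 1 / ((x + z) ^ (a + 1 + 1 - i) * x ^ i) =
        (∑ i ∈ Finset.Icc 1 a, 1 / ((x + z) ^ (a + 1 + 1 - i) * x ^ i)) +
          1 / ((x + z) * x ^ (a + 1)) := by
      rw [Finset.sum_Icc_succ_top (by omega)]
      norm_num
    rw [hsum]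
    have hre : ∀ i ∈ Finset.Icc 1 a, 1 / ((x + z) ^ (a + 1 + 1 - i) * x ^ i) =
        (1 / (x + z)) * (1 / ((x + z) ^ (a + 1 - i) * x ^ i)) := by
      intro i hi
      simp only [Finset.mem_Icc] at hi
      have he : a + 1 + 1 - i = (a + 1 - i) + 1 := by omega
      rw [he, pow_succ]
      have hxp : (0:ℝ) < x ^ i := by positivity
      have hXp : (0:ℝ) < (x + z) ^ (a + 1 - i) := by positivity
      field_simp
    rw [Finset.sum_congr rfl hre, ← Finset.mul_sum]
    have hmul : (1 / (x + z)) * ∑ i ∈ Finset.Icc 1 a, 1 / ((x + z) ^ (a + 1 - i) * x ^ i) =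
        (1 / (x + z)) * ((1 / (x ^ a * z)) - 1 / ((x + z) ^ a * z)) := by
      rw [ih]; ring
    rw [hmul]
    have hxa : (0:ℝ) < x ^ a := by positivity
    have hxza : (0:ℝ) < (x + z) ^ a := by positivity
    rw [pow_succ, pow_succ]
    field_simp
    ring

/-- permutation (n,j,k) ↦ (k, n, j) as an Equiv on ℕ×ℕ×ℕ -/
def permA : ℕ × ℕ × ℕ ≃ ℕ × ℕ × ℕ where
  toFun p := (p.2.2, p.1, p.2.1)
  invFun p := (p.2.1, p.2.2, p.1)
  left_inv p := rfl
  right_inv p := rfl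

/-- permutation (n,j,k) ↦ (n, k, j) -/
def permB : ℕ × ℕ × ℕ ≃ ℕ × ℕ × ℕ where
  toFun p := (p.1, p.2.2, p.2.1)
  invFun p := (p.1, p.2.2, p.2.1)
  left_inv p := rfl
  right_inv p := rfl

lemma tripleZeta_eq_tsum_G {s₁ s₂ s₃ : ℕ} (h : Summable (G s₁ s₂ s₃)) :
    tripleZeta s₁ s₂ s₃ = ∑' p : ℕ × ℕ × ℕ, G s₁ s₂ s₃ p := by
  rw [tripleZeta, Summable.tsum_prod' h (fun b => h.prod_factor b)]
  refine tsum_congr fun n => ?_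
  rw [Summable.tsum_prod' (h.prod_factor n) (fun b => (h.prod_factor n).prod_factor b)]
  rfl

end WittenAux

set_option maxHeartbeats 1000000 in
theorem wittenSl4_a01001 (a d : ℕ) (ha : 2 ≤ a) (hd : 2 ≤ d) :
    wittenSl4 a 0 1 0 0 (d + 1) =
      tripleZeta (d + 1) a 1 +
        ∑ i ∈ Finset.Icc 1 a, tripleZeta (d + 1) (a + 1 - i) i := by
  classical
  open WittenAux in
  have hGA : Summable (G (d + 1) a 1) := summable_G (by omega) (by omega) le_rfl (by omega)
  have hGB : ∀ i ∈ Finset.Icc 1 a, Summable (G (d + 1) (a + 1 - i) i) := by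
    intro i hi
    simp only [Finset.mem_Icc] at hi
    exact summable_G (by omega) (by omega) (by omega) (by omega)
  have hF : Summable (F a d) := summable_F ha hd
  -- step 1: wittenSl4 = tsum of F over the product
  have step1 : wittenSl4 a 0 1 0 0 (d + 1) = ∑' p : ℕ × ℕ × ℕ, F a d p := by
    rw [wittenSl4, Summable.tsum_prod' hF (fun b => hF.prod_factor b)]
    refine tsum_congr fun n₁ => ?_
    rw [Summable.tsum_prod' (hF.prod_factor n₁) (fun b => (hF.prod_factor n₁).prod_factor b)]
    refine tsum_congr fun n₂ => tsum_congr fun n₃ => ?_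
    simp only [F, pow_zero, pow_one, mul_one, one_mul]
  -- step 2: pointwise partial fractions
  have step2 : ∀ p : ℕ × ℕ × ℕ, F a d p =
      G (d + 1) a 1 (permA p) + ∑ i ∈ Finset.Icc 1 a, G (d + 1) (a + 1 - i) i (permB p) := by
    rintro ⟨n₁, n₂, n₃⟩
    have hx : (0:ℝ) < (n₁ : ℝ) + 1 := by positivity
    have hz : (0:ℝ) < (n₃ : ℝ) + 1 := by positivity
    have pf := WittenAux.partial_fractions a hx hz
    have key : F a d (n₁, n₂, n₃) =
        (1 / (((n₁:ℝ) + 1) ^ a * ((n₃:ℝ) + 1))) * (1 / (((n₁:ℝ) + n₂ + n₃ + 3) ^ (d + 1))) := by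
      simp only [F]
      rw [div_mul_div_comm, one_mul]
    have eA : (1 / ((((n₁:ℝ) + 1) + ((n₃:ℝ) + 1)) ^ a * ((n₃:ℝ) + 1))) *
        (1 / (((n₁:ℝ) + n₂ + n₃ + 3) ^ (d + 1))) = G (d + 1) a 1 (permA (n₁, n₂, n₃)) := by
      simp only [G, permA, Equiv.coe_fn_mk]
      have h1 : ((n₃:ℝ) + (n₁:ℝ) + (n₂:ℝ) + 3) = ((n₁:ℝ) + n₂ + n₃ + 3) := by push_cast; ring
      have h2 : ((n₃:ℝ) + (n₁:ℝ) + 2) = ((n₁:ℝ) + 1) + ((n₃:ℝ) + 1) := by push_cast; ring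
      rw [h1, h2, pow_one, div_mul_div_comm, one_mul]
      ring_nf
    have eB : ∀ i ∈ Finset.Icc 1 a,
        (1 / ((((n₁:ℝ) + 1) + ((n₃:ℝ) + 1)) ^ (a + 1 - i) * ((n₁:ℝ) + 1) ^ i)) *
          (1 / (((n₁:ℝ) + n₂ + n₃ + 3) ^ (d + 1))) =
        G (d + 1) (a + 1 - i) i (permB (n₁, n₂, n₃)) := by
      intro i hi
      simp only [G, permB, Equiv.coe_fn_mk]
      have h1 : ((n₁:ℝ) + (n₃:ℝ) + (n₂:ℝ) + 3) = ((n₁:ℝ) + n₂ + n₃ + 3) := by push_cast; ring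
      have h2 : ((n₁:ℝ) + (n₃:ℝ) + 2) = ((n₁:ℝ) + 1) + ((n₃:ℝ) + 1) := by push_cast; ring
      rw [h1, h2, div_mul_div_comm, one_mul]
      ring_nf
    calc F a d (n₁, n₂, n₃)
        = (1 / (((n₁:ℝ) + 1) ^ a * ((n₃:ℝ) + 1))) *
            (1 / (((n₁:ℝ) + n₂ + n₃ + 3) ^ (d + 1))) := key
      _ = ((∑ i ∈ Finset.Icc 1 a,
              1 / ((((n₁:ℝ) + 1) + ((n₃:ℝ) + 1)) ^ (a + 1 - i) * ((n₁:ℝ) + 1) ^ i)) +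
            1 / ((((n₁:ℝ) + 1) + ((n₃:ℝ) + 1)) ^ a * ((n₃:ℝ) + 1))) *
            (1 / (((n₁:ℝ) + n₂ + n₃ + 3) ^ (d + 1))) := by rw [pf]
      _ = (1 / ((((n₁:ℝ) + 1) + ((n₃:ℝ) + 1)) ^ a * ((n₃:ℝ) + 1))) *
            (1 / (((n₁:ℝ) + n₂ + n₃ + 3) ^ (d + 1))) +
          ∑ i ∈ Finset.Icc 1 a,
            (1 / ((((n₁:ℝ) + 1) + ((n₃:ℝ) + 1)) ^ (a + 1 - i) * ((n₁:ℝ) + 1) ^ i)) *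
              (1 / (((n₁:ℝ) + n₂ + n₃ + 3) ^ (d + 1))) := by
            rw [add_mul, Finset.sum_mul, add_comm]
      _ = G (d + 1) a 1 (permA (n₁, n₂, n₃)) +
            ∑ i ∈ Finset.Icc 1 a, G (d + 1) (a + 1 - i) i (permB (n₁, n₂, n₃)) := by
            rw [eA, Finset.sum_congr rfl eB]
  -- step 3: assemble
  have hSA : Summable (fun p => G (d + 1) a 1 (permA p)) := permA.summable_iff.mpr hGA
  have hSB : ∀ i ∈ Finset.Icc 1 a, Summable (fun p => G (d + 1) (a + 1 - i) i (permB p)) :=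
    fun i hi => permB.summable_iff.mpr (hGB i hi)
  have hSBsum : Summable (fun p => ∑ i ∈ Finset.Icc 1 a, G (d + 1) (a + 1 - i) i (permB p)) :=
    summable_sum hSB
  rw [step1, tsum_congr step2, Summable.tsum_add hSA hSBsum, Summable.tsum_finsetSum hSB]
  have eA : ∑' p, G (d + 1) a 1 (permA p) = tripleZeta (d + 1) a 1 := by
    rw [permA.tsum_eq, ← WittenAux.tripleZeta_eq_tsum_G hGA]
  have eB : ∀ i ∈ Finset.Icc 1 a,
      ∑' p, G (d + 1) (a + 1 - i) i (permB p) = tripleZeta (d + 1) (a + 1 - i) i := fun i hi => by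
    rw [permB.tsum_eq, ← WittenAux.tripleZeta_eq_tsum_G (hGB i hi)]
  rw [eA, Finset.sum_congr rfl eB]
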